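/- Let Q₃ be a positive definite quadratic form on symmetric 3×3 matrices, depending only on the symmetric part, and A symmetric positive definite. For each F ∈ ℝ^{2×2}, the minimization min{ Q₃(A^{−1}(F* + c⊗e₃)A^{−1}) : c ∈ ℝ³ } has a unique minimizer c(F) ∈ ℝ³ among symmetric completions, and the map F ↦ c(F) is linear in F. -/

import Mathlib

open Matrix

/-- The `3×3` matrix with principal `2×2` minor equal to `F` and all other entries `0`. -/
def starExt (F : Matrix (Fin 2) (Fin 2) ℝ) : Matrix (Fin 3) (Fin 3) ℝ :=
  Matrix.of fun i j =>
    if hi : (i : ℕ) < 2 then if hj : (j : ℕ) < 2 then F ⟨i, hi⟩ ⟨j, hj⟩ else 0 else 0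

/-- The matrix `c ⊗ e₃`, i.e. the `3×3` matrix whose third column is `c` and whose
other columns vanish. -/
def colE3 (c : Fin 3 → ℝ) : Matrix (Fin 3) (Fin 3) ℝ :=
  Matrix.of fun i j => if j = 2 then c i else 0

lemma colE3_add (c d : Fin 3 → ℝ) : colE3 (c + d) = colE3 c + colE3 d := by
  ext i j; by_cases h : j = 2 <;> simp [colE3, h]

lemma colE3_smul (r : ℝ) (c : Fin 3 → ℝ) : colE3 (r • c) = r • colE3 c := by
  ext i j; by_cases h : j = 2 <;> simp [colE3, h]

lemma starExt_add (F G : Matrix (Fin 2) (Fin 2) ℝ) :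
    starExt (F + G) = starExt F + starExt G := by
  ext i j; simp only [starExt, Matrix.of_apply, Matrix.add_apply]
  split <;> [skip; simp]; split <;> simp

lemma starExt_smul (r : ℝ) (F : Matrix (Fin 2) (Fin 2) ℝ) :
    starExt (r • F) = r • starExt F := by
  ext i j; simp only [starExt, Matrix.of_apply, Matrix.smul_apply]
  split <;> [skip; simp]; split <;> simp

/-- For a quadratic form `Q₃`, positive definite on symmetric matrices and depending
only on the symmetric part, and `A` symmetric positive definite, the minimization
`min{Q₃(A⁻¹(F* + c⊗e₃)A⁻¹) : c ∈ ℝ³}` has a unique minimizer `c(F)`, and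
`F ↦ c(F)` is linear. -/
theorem unique_linear_minimizer
    (Q3 : Matrix (Fin 3) (Fin 3) ℝ → ℝ)
    (hquad : ∃ B : Matrix (Fin 3) (Fin 3) ℝ →ₗ[ℝ] Matrix (Fin 3) (Fin 3) ℝ →ₗ[ℝ] ℝ,
      (∀ X Y, B X Y = B Y X) ∧ ∀ X, Q3 X = B X X)
    (hsym : ∀ X : Matrix (Fin 3) (Fin 3) ℝ, Q3 X = Q3 ((1/2 : ℝ) • (X + Xᵀ)))
    (hposdef : ∀ X : Matrix (Fin 3) (Fin 3) ℝ, Xᵀ = X → X ≠ 0 → 0 < Q3 X)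
    (A : Matrix (Fin 3) (Fin 3) ℝ) (hA : A.PosDef) :
    ∃ L : Matrix (Fin 2) (Fin 2) ℝ →ₗ[ℝ] (Fin 3 → ℝ),
      ∀ F : Matrix (Fin 2) (Fin 2) ℝ,
        (∀ c : Fin 3 → ℝ,
          Q3 (A⁻¹ * (starExt F + colE3 (L F)) * A⁻¹)
            ≤ Q3 (A⁻¹ * (starExt F + colE3 c) * A⁻¹)) ∧
        (∀ c : Fin 3 → ℝ,
          (∀ c' : Fin 3 → ℝ,
            Q3 (A⁻¹ * (starExt F + colE3 c) * A⁻¹)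
              ≤ Q3 (A⁻¹ * (starExt F + colE3 c') * A⁻¹)) →
          c = L F) := by
  classical
  obtain ⟨B, hBsymm, hBQ⟩ := hquad
  have hAsym : Aᵀ = A := by
    have := hA.1.eq
    simpa [Matrix.conjTranspose_eq_transpose_of_trivial] using this
  have hAdet : IsUnit A.det := isUnit_iff_ne_zero.mpr hA.det_pos.ne'
  have hAinv : (A⁻¹)ᵀ = A⁻¹ := by rw [Matrix.transpose_nonsing_inv, hAsym]
  -- the linear maps φ and ψ
  set φ : (Fin 3 → ℝ) →ₗ[ℝ] Matrix (Fin 3) (Fin 3) ℝ :=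
    { toFun := fun c => A⁻¹ * colE3 c * A⁻¹
      map_add' := fun c d => by
        show A⁻¹ * colE3 (c + d) * A⁻¹ = _
        rw [colE3_add, Matrix.mul_add, Matrix.add_mul]
      map_smul' := fun r c => by
        show A⁻¹ * colE3 (r • c) * A⁻¹ = _
        rw [colE3_smul]; simp [Matrix.mul_smul, Matrix.smul_mul] } with hφ
  set ψ : Matrix (Fin 2) (Fin 2) ℝ →ₗ[ℝ] Matrix (Fin 3) (Fin 3) ℝ :=
    { toFun := fun F => A⁻¹ * starExt F * A⁻¹
      map_add' := fun c d => by
        show A⁻¹ * starExt (c + d) * A⁻¹ = _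
        rw [starExt_add, Matrix.mul_add, Matrix.add_mul]
      map_smul' := fun r c => by
        show A⁻¹ * starExt (r • c) * A⁻¹ = _
        rw [starExt_smul]; simp [Matrix.mul_smul, Matrix.smul_mul] } with hψ
  -- positivity of the quadratic form c ↦ B (φ c) (φ c)
  have hQpos : ∀ x : Fin 3 → ℝ, x ≠ 0 → 0 < B (φ x) (φ x) := by
    intro x hx
    rw [← hBQ]
    rw [hsym]
    set S := (1/2 : ℝ) • (φ x + (φ x)ᵀ) with hS
    apply hposdef
    · rw [hS, Matrix.transpose_smul, Matrix.transpose_add, Matrix.transpose_transpose,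
        add_comm]
    · -- S ≠ 0
      intro hS0
      apply hx
      have hφx : (φ x) + (φ x)ᵀ = A⁻¹ * (colE3 x + (colE3 x)ᵀ) * A⁻¹ := by
        simp only [hφ, LinearMap.coe_mk, AddHom.coe_mk]
        rw [Matrix.transpose_mul, Matrix.transpose_mul, hAinv,
          Matrix.mul_add, Matrix.add_mul, Matrix.mul_assoc, Matrix.mul_assoc]
      have hN : colE3 x + (colE3 x)ᵀ = 0 := by
        have h1 : (φ x) + (φ x)ᵀ = 0 := by
          have : ((1:ℝ)/2) ≠ 0 := by norm_num
          rcases smul_eq_zero.mp (hS ▸ hS0) with h | h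
          · exact absurd h this
          · exact h
        have h2 : A⁻¹ * (colE3 x + (colE3 x)ᵀ) * A⁻¹ = 0 := by rw [← hφx, h1]
        calc colE3 x + (colE3 x)ᵀ
            = A * (A⁻¹ * (colE3 x + (colE3 x)ᵀ) * A⁻¹) * A := by
              rw [← Matrix.mul_assoc, ← Matrix.mul_assoc,
                Matrix.mul_nonsing_inv A hAdet, Matrix.one_mul, Matrix.mul_assoc,
                Matrix.nonsing_inv_mul A hAdet, Matrix.mul_one]
          _ = 0 := by rw [h2, Matrix.mul_zero, Matrix.zero_mul]
      have h0 := congrFun (congrFun hN 0) 2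
      have h1 := congrFun (congrFun hN 1) 2
      have h2 := congrFun (congrFun hN 2) 2
      simp [colE3, Matrix.transpose_apply] at h0 h1 h2
      funext i
      fin_cases i <;> first | exact h0 | exact h1 | exact h2
  -- matrix of the bilinear form P = B ∘ (φ × φ)
  set P : (Fin 3 → ℝ) →ₗ[ℝ] (Fin 3 → ℝ) →ₗ[ℝ] ℝ := B.compl₁₂ φ φ with hP
  set M : Matrix (Fin 3) (Fin 3) ℝ := LinearMap.toMatrix₂' ℝ P with hM
  have hPM : ∀ c d : Fin 3 → ℝ, B (φ c) (φ d) = c ⬝ᵥ M *ᵥ d := by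
    intro c d
    have := Matrix.toLinearMap₂'_apply' (T := ℝ) M c d
    rw [hM, Matrix.toLinearMap₂'_toMatrix'] at this
    rw [← this]; rfl
  have hMpd : M.PosDef := by
    refine Matrix.posDef_iff_dotProduct_mulVec.mpr ⟨?_, ?_⟩
    · ext i j
      simp only [Matrix.conjTranspose_apply, star_trivial]
      rw [hM, LinearMap.toMatrix₂'_apply, LinearMap.toMatrix₂'_apply]
      exact hBsymm _ _
    · intro x hx
      have : x ⬝ᵥ M *ᵥ x = B (φ x) (φ x) := (hPM x x).symm
      simpa [this] using hQpos x hx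
  have hMdet : IsUnit M.det := isUnit_iff_ne_zero.mpr hMpd.det_pos.ne'
  -- the linear functional part
  set b : Matrix (Fin 2) (Fin 2) ℝ →ₗ[ℝ] (Fin 3 → ℝ) :=
    { toFun := fun F i => B (ψ F) (φ (Pi.single i 1))
      map_add' := fun F G => by funext i; simp
      map_smul' := fun r F => by funext i; simp } with hb
  have hbd : ∀ (F : Matrix (Fin 2) (Fin 2) ℝ) (d : Fin 3 → ℝ),
      B (ψ F) (φ d) = b F ⬝ᵥ d := by
    intro F d
    have := LinearMap.pi_apply_eq_sum_univ ((B (ψ F)).comp φ) d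
    simp only [LinearMap.comp_apply] at this
    rw [this, dotProduct]
    apply Finset.sum_congr rfl
    intro i _
    have hsingle : (Pi.single i 1 : Fin 3 → ℝ) = fun j => if i = j then 1 else 0 := by
      funext j; simp [Pi.single_apply, eq_comm]
    simp only [hb, LinearMap.coe_mk, AddHom.coe_mk, smul_eq_mul, hsingle]
    ring
  -- the minimizer map
  set L : Matrix (Fin 2) (Fin 2) ℝ →ₗ[ℝ] (Fin 3 → ℝ) :=
    -((Matrix.mulVecLin M⁻¹).comp b) with hL
  refine ⟨L, fun F => ?_⟩
  set X := ψ F with hX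
  have hrewrite : ∀ c : Fin 3 → ℝ,
      A⁻¹ * (starExt F + colE3 c) * A⁻¹ = X + φ c := by
    intro c
    simp only [hX, hψ, hφ, LinearMap.coe_mk, AddHom.coe_mk]
    rw [Matrix.mul_add, Matrix.add_mul]
  set c₀ : Fin 3 → ℝ := L F with hc₀
  have hc₀' : c₀ = -(M⁻¹ *ᵥ b F) := by
    simp [hc₀, hL]
  -- cross terms vanish
  have hcross : ∀ u : Fin 3 → ℝ, B X (φ u) + B (φ c₀) (φ u) = 0 := by
    intro u
    rw [hbd F u, hBsymm (φ c₀) (φ u), hPM u c₀, hc₀']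
    rw [Matrix.mulVec_neg, Matrix.mulVec_mulVec, Matrix.mul_nonsing_inv M hMdet,
      Matrix.one_mulVec]
    rw [dotProduct_comm (b F) u, dotProduct_neg]
    ring
  -- the key expansion
  have hkey : ∀ c : Fin 3 → ℝ,
      Q3 (A⁻¹ * (starExt F + colE3 c) * A⁻¹)
        = Q3 (A⁻¹ * (starExt F + colE3 c₀) * A⁻¹) + B (φ (c - c₀)) (φ (c - c₀)) := by
    intro c
    rw [hrewrite, hrewrite, hBQ, hBQ]
    have hdecomp : X + φ c = (X + φ c₀) + φ (c - c₀) := by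
      rw [map_sub]; abel
    rw [hdecomp]
    simp only [map_add, LinearMap.add_apply, map_sub, LinearMap.sub_apply]
    have h1 := hcross (c - c₀)
    have h2 : B (φ (c - c₀)) X = B X (φ (c - c₀)) := hBsymm _ _
    have h3 : B (φ (c - c₀)) (φ c₀) = B (φ c₀) (φ (c - c₀)) := hBsymm _ _
    simp only [map_sub, LinearMap.sub_apply] at h1 h2 h3 ⊢
    linarith
  have hnn : ∀ u : Fin 3 → ℝ, 0 ≤ B (φ u) (φ u) := by
    intro u
    rcases eq_or_ne u 0 with h | h
    · simp [h]
    · exact (hQpos u h).le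
  constructor
  · intro c
    have := hkey c
    have := hnn (c - c₀)
    linarith [hkey c]
  · intro c hc
    by_contra hne
    have hu : c - c₀ ≠ 0 := sub_ne_zero.mpr hne
    have h1 := hQpos _ hu
    have h2 := hc c₀
    have h3 := hkey c
    linarith
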